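/- Let G be an inverse semigroup with idempotent set E, let X be the space of semicharacters of E with the topology of pointwise convergence, and fix g ∈ G. Set U_g := {φ ∈ X : there exists e ∈ E with e g = e and φ(e) = 1} (the carrier of the pointwise supremum ⋁{1_e : e ∈ E, e ≤ g}). Then the indicator function 1_{U_g} : X → ℝ is continuous and vanishes at infinity (i.e. lies in C₀(X)) if and only if there exists a finite subset F ⊆ {e ∈ E : e g = e} such that U_g = ⋃_{e ∈ F} {φ ∈ X : φ(e) = 1}. (Hence G is E-continuous iff for every g ∈ G the supremum ⋁{e ∈ E : e ≤ g} can be realized by a finite subset F ⊆ E.) -/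

import Mathlib

/-- A semicharacter of the idempotent semilattice `E = {e : G // e * e = e}` of an inverse
semigroup `G`: a `{0,1}`-valued, multiplicative, not identically zero map on `E`. -/
def IsSemicharacter {G : Type*} [Semigroup G] (φ : {e : G // e * e = e} → ℂ) : Prop :=
  (∀ e, φ e = 0 ∨ φ e = 1) ∧
  (∀ e f ef : {e : G // e * e = e}, (ef : G) = (e : G) * (f : G) → φ ef = φ e * φ f) ∧
  (∃ e, φ e = 1)

/-- The space `X` of semicharacters of `E`, with the topology of pointwise convergence
(subspace of the product topology). -/
abbrev SemicharSpace (G : Type*) [Semigroup G] : Type _ :=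
  {φ : {e : G // e * e = e} → ℂ // IsSemicharacter φ}

namespace Stmt16Aux

variable {G : Type*} [Semigroup G]

lemma continuous_eval (e : {e : G // e * e = e}) :
    Continuous fun φ : SemicharSpace G => φ.1 e :=
  (continuous_apply e).comp continuous_subtype_val

lemma isOpen_De (e : {e : G // e * e = e}) :
    IsOpen {φ : SemicharSpace G | φ.1 e = 1} := by
  have h : {φ : SemicharSpace G | φ.1 e = 1}
      = (fun φ : SemicharSpace G => φ.1 e) ⁻¹' ({0}ᶜ) := by
    ext φ
    simp only [Set.mem_setOf_eq, Set.mem_preimage, Set.mem_compl_iff, Set.mem_singleton_iff]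
    constructor
    · intro h; rw [h]; norm_num
    · intro h; rcases φ.2.1 e with h0 | h1
      · exact absurd h0 h
      · exact h1
  rw [h]
  exact isOpen_compl_singleton.preimage (continuous_eval e)

lemma isClosed_De (e : {e : G // e * e = e}) :
    IsClosed {φ : SemicharSpace G | φ.1 e = 1} :=
  isClosed_eq (continuous_eval e) continuous_const

lemma isCompact_De (e : {e : G // e * e = e}) :
    IsCompact {φ : SemicharSpace G | φ.1 e = 1} := by
  set S : Set ({e : G // e * e = e} → ℂ) :=
    {φ | (∀ f, φ f = 0 ∨ φ f = 1) ∧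
      (∀ a b ab : {e : G // e * e = e}, (ab : G) = (a : G) * (b : G) → φ ab = φ a * φ b) ∧
      φ e = 1} with hS
  have hS_sub : S ⊆ Set.pi Set.univ (fun _ => ({0, 1} : Set ℂ)) := by
    intro φ hφ f _
    rcases hφ.1 f with h | h <;> simp [h]
  have h1 : IsClosed {φ : {e : G // e * e = e} → ℂ | ∀ f, φ f = 0 ∨ φ f = 1} := by
    have heq : {φ : {e : G // e * e = e} → ℂ | ∀ f, φ f = 0 ∨ φ f = 1}
        = ⋂ f, (fun φ : {e : G // e * e = e} → ℂ => φ f) ⁻¹' ({0, 1} : Set ℂ) := by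
      ext φ; simp [Set.mem_iInter]
    rw [heq]
    exact isClosed_iInter fun f =>
      ((Set.toFinite ({0, 1} : Set ℂ)).isClosed).preimage (continuous_apply f)
  have h2 : IsClosed {φ : {e : G // e * e = e} → ℂ |
      ∀ a b ab : {e : G // e * e = e}, (ab : G) = (a : G) * (b : G) → φ ab = φ a * φ b} := by
    have heq : {φ : {e : G // e * e = e} → ℂ |
        ∀ a b ab : {e : G // e * e = e}, (ab : G) = (a : G) * (b : G) → φ ab = φ a * φ b}
        = ⋂ (a : {e : G // e * e = e}) (b : {e : G // e * e = e}) (ab : {e : G // e * e = e})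
            (_ : (ab : G) = (a : G) * (b : G)),
            {φ : {e : G // e * e = e} → ℂ | φ ab = φ a * φ b} := by
      ext φ; simp [Set.mem_iInter]
    rw [heq]
    exact isClosed_iInter fun a => isClosed_iInter fun b => isClosed_iInter fun ab =>
      isClosed_iInter fun _ =>
        isClosed_eq (continuous_apply ab) ((continuous_apply a).mul (continuous_apply b))
  have h3 : IsClosed {φ : {e : G // e * e = e} → ℂ | φ e = 1} :=
    isClosed_eq (continuous_apply e) continuous_const
  have hS_closed : IsClosed S := by
    have : S = {φ : {e : G // e * e = e} → ℂ | ∀ f, φ f = 0 ∨ φ f = 1}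
        ∩ ({φ | ∀ a b ab : {e : G // e * e = e},
              (ab : G) = (a : G) * (b : G) → φ ab = φ a * φ b}
          ∩ {φ | φ e = 1}) := by
      ext φ; simp [hS, Set.mem_setOf_eq, and_assoc]
    rw [this]
    exact h1.inter (h2.inter h3)
  have hPi : IsCompact (Set.pi Set.univ fun _ : {e : G // e * e = e} => ({0, 1} : Set ℂ)) :=
    isCompact_univ_pi fun _ => (Set.toFinite ({0, 1} : Set ℂ)).isCompact
  have hS_compact : IsCompact S := hPi.of_isClosed_subset hS_closed hS_sub
  have himg : Subtype.val '' {φ : SemicharSpace G | φ.1 e = 1} = S := by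
    ext ψ
    constructor
    · rintro ⟨φ, hφ, rfl⟩
      exact ⟨φ.2.1, φ.2.2.1, hφ⟩
    · rintro ⟨hv, hm, he⟩
      exact ⟨⟨ψ, hv, hm, ⟨e, he⟩⟩, he, rfl⟩
  rw [Topology.IsEmbedding.subtypeVal.isCompact_iff, himg]
  exact hS_compact

end Stmt16Aux


/-- For fixed `g ∈ G` let
`U_g = {φ ∈ X : ∃ e ∈ E, e g = e and φ(e) = 1}` (the carrier of `⋁{1_e : e ≤ g}`). Then the
indicator function of `U_g` is continuous and vanishes at infinity (lies in `C₀(X)`) if and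
only if `U_g` is a finite union `⋃_{e ∈ F} D_e` over a finite set `F ⊆ {e ∈ E : e ≤ g}`. -/
theorem stmt16 {G : Type*} [Semigroup G]
    (inv : G → G)
    (hinv1 : ∀ g, g * inv g * g = g)
    (hinv2 : ∀ g, inv g * g * inv g = inv g)
    (hinv_unique : ∀ g i, g * i * g = g → i * g * i = i → i = inv g)
    (g : G) :
    (Continuous (Set.indicator
        {φ : SemicharSpace G | ∃ e : {e : G // e * e = e}, (e : G) * g = (e : G) ∧ φ.1 e = 1}
        (fun _ => (1 : ℝ))) ∧
      Filter.Tendsto (Set.indicator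
        {φ : SemicharSpace G | ∃ e : {e : G // e * e = e}, (e : G) * g = (e : G) ∧ φ.1 e = 1}
        (fun _ => (1 : ℝ))) (Filter.cocompact (SemicharSpace G)) (nhds 0))
    ↔ ∃ F : Finset {e : G // e * e = e},
        (∀ e ∈ F, (e : G) * g = (e : G)) ∧
        {φ : SemicharSpace G | ∃ e : {e : G // e * e = e}, (e : G) * g = (e : G) ∧ φ.1 e = 1}
          = ⋃ e ∈ F, {φ : SemicharSpace G | φ.1 e = 1} := by
  classical
  set U : Set (SemicharSpace G) :=
    {φ : SemicharSpace G | ∃ e : {e : G // e * e = e}, (e : G) * g = (e : G) ∧ φ.1 e = 1}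
    with hU
  constructor
  · rintro ⟨hc, ht⟩
    -- U is closed
    have hUind : U.indicator (fun _ => (1 : ℝ)) ⁻¹' {1} = U := by
      ext φ
      by_cases hφ : φ ∈ U <;>
        simp [Set.indicator_apply, hφ]
    have hUclosed : IsClosed U := by
      rw [← hUind]
      exact isClosed_singleton.preimage hc
    -- U is contained in a compact set
    have hmem : U.indicator (fun _ => (1 : ℝ)) ⁻¹' Metric.ball 0 (1/2)
        ∈ Filter.cocompact (SemicharSpace G) :=
      ht (Metric.ball_mem_nhds 0 (by norm_num))
    obtain ⟨K, hK, hKsub⟩ := Filter.mem_cocompact.mp hmem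
    have hUK : U ⊆ K := by
      intro φ hφ
      by_contra h
      have := hKsub h
      simp only [Set.mem_preimage, Metric.mem_ball, Set.indicator_of_mem hφ] at this
      rw [dist_zero_right] at this
      norm_num at this
    have hUcompact : IsCompact U := hK.of_isClosed_subset hUclosed hUK
    -- finite subcover
    have hcover : U ⊆ ⋃ i : {e : {e : G // e * e = e} // (e : G) * g = (e : G)},
        {φ : SemicharSpace G | φ.1 i.1 = 1} := by
      rintro φ ⟨e, heg, he⟩
      exact Set.mem_iUnion.mpr ⟨⟨e, heg⟩, he⟩
    obtain ⟨t, ht'⟩ := hUcompact.elim_finite_subcover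
      (fun i : {e : {e : G // e * e = e} // (e : G) * g = (e : G)} =>
        {φ : SemicharSpace G | φ.1 i.1 = 1})
      (fun i => Stmt16Aux.isOpen_De i.1) hcover
    refine ⟨t.image Subtype.val, ?_, ?_⟩
    · intro e he
      obtain ⟨i, _, rfl⟩ := Finset.mem_image.mp he
      exact i.2
    · apply Set.Subset.antisymm
      · intro φ hφ
        obtain ⟨i, hi, hφi⟩ := Set.mem_iUnion₂.mp (ht' hφ)
        exact Set.mem_iUnion₂.mpr ⟨i.1, Finset.mem_image_of_mem _ hi, hφi⟩
      · intro φ hφ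
        obtain ⟨e, he, hφe⟩ := Set.mem_iUnion₂.mp hφ
        obtain ⟨i, _, rfl⟩ := Finset.mem_image.mp he
        exact ⟨i.1, i.2, hφe⟩
  · rintro ⟨F, hF, hUF⟩
    have hUopen : IsOpen U := by
      rw [hUF]
      exact isOpen_biUnion fun e _ => Stmt16Aux.isOpen_De e
    have hUclosed : IsClosed U := by
      rw [hUF]
      exact F.finite_toSet.isClosed_biUnion fun e _ => Stmt16Aux.isClosed_De e
    have hUcompact : IsCompact U := by
      rw [hUF]
      exact F.finite_toSet.isCompact_biUnion fun e _ => Stmt16Aux.isCompact_De e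
    constructor
    · have hfr : frontier U = ∅ := by
        rw [hUclosed.frontier_eq, hUopen.interior_eq, Set.diff_self]
      have : U.indicator (fun _ => (1 : ℝ))
          = U.piecewise (fun _ => (1 : ℝ)) (fun _ => (0 : ℝ)) := by
        funext φ
        by_cases hφ : φ ∈ U <;> simp [Set.indicator_apply, Set.piecewise, hφ]
      rw [this]
      exact continuous_const.piecewise (by simp [hfr]) continuous_const
    · have heq : U.indicator (fun _ => (1 : ℝ))
          =ᶠ[Filter.cocompact (SemicharSpace G)] (fun _ => (0 : ℝ)) := by
        filter_upwards [hUcompact.compl_mem_cocompact] with φ hφ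
        exact Set.indicator_of_notMem hφ _
      exact Filter.Tendsto.congr' heq.symm tendsto_const_nhds
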